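/- Let S be a Cu-semigroup in which, for every x' ≪ x, there exist y', y ∈ S with x' ≪ y' ≪ y ≪ x and y ≤ ∞·y'. Then for every x' ≪ x there exists a sequence y'_k ≪ y_k (k ∈ ℕ) with x' ≪ y'_0, y_k ≪ y'_{k+1}, y_k ≪ x, and y_k ≤ ∞·y'_k for all k; in particular, z := sup_k y_k satisfies x' ≪ z ≤ x and z = sup_k y'_k. -/
import Mathlib


/-- A Cu-semigroup: a positively ordered abelian monoid in which every
increasing sequence has a supremum and addition preserves such suprema. -/
class CuSemigroup (S : Type*) extends AddCommMonoid S, PartialOrder S where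
  add_le_add' : ∀ {a b c d : S}, a ≤ b → c ≤ d → a + c ≤ b + d
  zero_le' : ∀ a : S, 0 ≤ a
  /-- supremum of an increasing sequence -/
  seqSup : (ℕ → S) → S
  le_seqSup : ∀ (f : ℕ → S), Monotone f → ∀ n, f n ≤ seqSup f
  seqSup_le : ∀ (f : ℕ → S), Monotone f → ∀ b : S, (∀ n, f n ≤ b) → seqSup f ≤ b
  add_seqSup : ∀ (f : ℕ → S) (a : S), Monotone f →
    seqSup (fun n => a + f n) = a + seqSup f

variable {S : Type*} [CuSemigroup S]

/-- The way-below relation in a Cu-semigroup. -/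
def wayBelow (x y : S) : Prop :=
  ∀ f : ℕ → S, Monotone f → y ≤ CuSemigroup.seqSup f → ∃ n, x ≤ f n

infix:50 " ≪ " => wayBelow

/-- ∞·x := sup_n (n·x). -/
def infty (x : S) : S := CuSemigroup.seqSup (fun n => n • x)

theorem stmt10
    (hinterp : ∀ x' x : S, x' ≪ x → ∃ z : S, x' ≪ z ∧ z ≪ x)
    (hdense : ∀ x' x : S, x' ≪ x →
      ∃ y' y : S, x' ≪ y' ∧ y' ≪ y ∧ y ≪ x ∧ y ≤ infty y')
    (x' x : S) (h : x' ≪ x) :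
    ∃ y' y : ℕ → S,
      (x' ≪ y' 0) ∧
      (∀ k, y' k ≪ y k) ∧
      (∀ k, y k ≪ y' (k + 1)) ∧
      (∀ k, y k ≪ x) ∧
      (∀ k, y k ≤ infty (y' k)) ∧
      (x' ≪ CuSemigroup.seqSup y) ∧
      CuSemigroup.seqSup y ≤ x ∧
      CuSemigroup.seqSup y = CuSemigroup.seqSup y' := by

  classical
  have le_of_wb : ∀ a b : S, a ≪ b → a ≤ b := by
    intro a b hab
    obtain ⟨n, hn⟩ := hab (fun _ => b) monotone_const
      (CuSemigroup.le_seqSup (fun _ => b) monotone_const 0)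
    exact hn
  have wb_mono : ∀ a b c : S, a ≪ b → b ≤ c → a ≪ c := by
    intro a b c hab hbc f hf hc
    exact hab f hf (le_trans hbc hc)
  obtain ⟨a', a, ha1, ha2, ha3, ha4⟩ := hdense x' x h
  let step : (p : S × S) → p.2 ≪ x →
      {q : S × S // p.2 ≪ q.1 ∧ q.1 ≪ q.2 ∧ q.2 ≪ x ∧ q.2 ≤ infty q.1} := by
    intro p hp
    choose y' y h1 h2 h3 h4 using hdense p.2 x hp
    exact ⟨(y', y), h1, h2, h3, h4⟩
  let F : ℕ → {p : S × S // p.1 ≪ p.2 ∧ p.2 ≪ x ∧ p.2 ≤ infty p.1} :=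
    fun n => Nat.rec ⟨(a', a), ha2, ha3, ha4⟩
      (fun _ p => ⟨(step p.1 p.2.2.1).1, (step p.1 p.2.2.1).2.2⟩) n
  have hlink : ∀ k, (F k).1.2 ≪ (F (k + 1)).1.1 := by
    intro k
    exact (step (F k).1 (F k).2.2.1).2.1
  have hy'le : ∀ k, (F k).1.1 ≤ (F k).1.2 := fun k => le_of_wb _ _ (F k).2.1
  have hmono_y : Monotone (fun k => (F k).1.2) :=
    monotone_nat_of_le_succ (fun k => le_trans (le_of_wb _ _ (hlink k)) (hy'le (k + 1)))
  have hmono_y' : Monotone (fun k => (F k).1.1) :=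
    monotone_nat_of_le_succ (fun k => le_trans (hy'le k) (le_of_wb _ _ (hlink k)))
  refine ⟨fun k => (F k).1.1, fun k => (F k).1.2, ha1, fun k => (F k).2.1,
    hlink, fun k => (F k).2.2.1, fun k => (F k).2.2.2, ?_, ?_, ?_⟩
  · exact wb_mono _ _ _ ha1 (le_trans (hy'le 0)
      (CuSemigroup.le_seqSup _ hmono_y 0))
  · exact CuSemigroup.seqSup_le _ hmono_y x (fun k => le_of_wb _ _ (F k).2.2.1)
  · refine le_antisymm ?_ ?_
    · exact CuSemigroup.seqSup_le _ hmono_y _ (fun k => le_trans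
        (le_of_wb _ _ (hlink k)) (CuSemigroup.le_seqSup _ hmono_y' (k + 1)))
    · exact CuSemigroup.seqSup_le _ hmono_y' _ (fun k => le_trans (hy'le k)
        (CuSemigroup.le_seqSup _ hmono_y k))
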